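/- For a function class H of linear maps x ↦ ⟨β, x⟩ with β ranging over G-invariant vectors of Euclidean norm at most B, the empirical Rademacher complexity over samples x_1, …, x_n is at most B · max_i ‖x̄_i‖ / √n, where x̄_i is the orbit average of x_i. -/

import Mathlib

open Matrix

private lemma dotP_sum {d : ℕ} {ι : Type*} (v : Fin d → ℝ) (s : Finset ι) (f : ι → Fin d → ℝ) :
    v ⬝ᵥ (∑ i ∈ s, f i) = ∑ i ∈ s, v ⬝ᵥ f i := by
  simp only [dotProduct, Finset.sum_apply, Finset.mul_sum]
  exact Finset.sum_comm

private lemma sum_dotP {d : ℕ} {ι : Type*} (v : Fin d → ℝ) (s : Finset ι) (f : ι → Fin d → ℝ) :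
    (∑ i ∈ s, f i) ⬝ᵥ v = ∑ i ∈ s, f i ⬝ᵥ v := by
  simp only [dotProduct, Finset.sum_apply, Finset.sum_mul]
  exact Finset.sum_comm

private lemma dotP_nonneg {d : ℕ} (v : Fin d → ℝ) : 0 ≤ v ⬝ᵥ v :=
  Finset.sum_nonneg fun i _ => mul_self_nonneg _

private lemma dotP_cs {d : ℕ} (a b : Fin d → ℝ) :
    a ⬝ᵥ b ≤ Real.sqrt (a ⬝ᵥ a) * Real.sqrt (b ⬝ᵥ b) := by
  have h := Finset.sum_mul_sq_le_sq_mul_sq Finset.univ a b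
  calc a ⬝ᵥ b ≤ |∑ i, a i * b i| := le_abs_self _
    _ = Real.sqrt ((∑ i, a i * b i) ^ 2) := (Real.sqrt_sq_eq_abs _).symm
    _ ≤ Real.sqrt ((∑ i, a i ^ 2) * ∑ i, b i ^ 2) := Real.sqrt_le_sqrt h
    _ = _ := by
        rw [Real.sqrt_mul (Finset.sum_nonneg fun i _ => sq_nonneg _)]
        simp [dotProduct, sq]

/-- The empirical Rademacher complexity of the class of G-invariant linear predictors of
norm at most B is bounded by B · max_i ‖x̄_i‖ / √n. Expectation over Rademacher signs is
written as the average over all sign patterns σ : Fin n → Bool. -/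
theorem rademacher_bound_invariant_linear_class {G : Type*} [Group G] [Fintype G]
    {d n : ℕ} (hn : 0 < n)
    (ρ : G →* Matrix.GeneralLinearGroup (Fin d) ℝ)
    (x : Fin n → Fin d → ℝ)
    (xbar : Fin n → Fin d → ℝ)
    (hxbar : ∀ i, xbar i = (Fintype.card G : ℝ)⁻¹ •
      ∑ g : G, (ρ g : Matrix (Fin d) (Fin d) ℝ) *ᵥ x i)
    (B : ℝ) (hB : 0 ≤ B)
    (sgn : Bool → ℝ) (hsgn : sgn true = 1 ∧ sgn false = -1) :
    (n : ℝ)⁻¹ * ((2 ^ n : ℝ)⁻¹ *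
        ∑ σ : Fin n → Bool,
          sSup {s : ℝ | ∃ β : Fin d → ℝ,
            (∀ (v : Fin d → ℝ) (g : G),
              β ⬝ᵥ v = β ⬝ᵥ ((ρ g : Matrix (Fin d) (Fin d) ℝ) *ᵥ v)) ∧
            Real.sqrt (β ⬝ᵥ β) ≤ B ∧
            s = ∑ i : Fin n, sgn (σ i) * (β ⬝ᵥ x i)})
      ≤ B * (⨆ i : Fin n, Real.sqrt (xbar i ⬝ᵥ xbar i)) / Real.sqrt n := by
  classical
  obtain ⟨hst, hsf⟩ := hsgn
  have hsq : ∀ b, sgn b * sgn b = 1 := by rintro (_ | _) <;> simp [hst, hsf]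
  have hneg : ∀ b, sgn (!b) = - sgn b := by rintro (_ | _) <;> simp [hst, hsf]
  set M := ⨆ i : Fin n, Real.sqrt (xbar i ⬝ᵥ xbar i) with hMdef
  have hMle : ∀ i, Real.sqrt (xbar i ⬝ᵥ xbar i) ≤ M :=
    fun i => le_ciSup (f := fun i => Real.sqrt (xbar i ⬝ᵥ xbar i))
      (Set.Finite.bddAbove (Set.finite_range _)) i
  have hM0 : 0 ≤ M := le_trans (Real.sqrt_nonneg _) (hMle ⟨0, hn⟩)
  set v : (Fin n → Bool) → (Fin d → ℝ) := fun σ => ∑ i : Fin n, sgn (σ i) • xbar i with hv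
  -- invariance: β ⬝ᵥ x i = β ⬝ᵥ xbar i for invariant β
  have hinvdot : ∀ (β : Fin d → ℝ),
      (∀ (w : Fin d → ℝ) (g : G), β ⬝ᵥ w = β ⬝ᵥ ((ρ g : Matrix (Fin d) (Fin d) ℝ) *ᵥ w)) →
      ∀ i, β ⬝ᵥ x i = β ⬝ᵥ xbar i := by
    intro β hβ i
    rw [hxbar i, dotProduct_smul, dotP_sum, smul_eq_mul]
    have : ∀ g : G, β ⬝ᵥ ((ρ g : Matrix (Fin d) (Fin d) ℝ) *ᵥ x i) = β ⬝ᵥ x i :=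
      fun g => (hβ (x i) g).symm
    rw [Finset.sum_congr rfl fun g _ => this g, Finset.sum_const, Finset.card_univ,
      nsmul_eq_mul, ← mul_assoc, inv_mul_cancel₀, one_mul]
    exact_mod_cast Fintype.card_ne_zero
  -- Step A : pointwise sSup bound
  have stepA : ∀ σ : Fin n → Bool,
      sSup {s : ℝ | ∃ β : Fin d → ℝ,
        (∀ (w : Fin d → ℝ) (g : G),
          β ⬝ᵥ w = β ⬝ᵥ ((ρ g : Matrix (Fin d) (Fin d) ℝ) *ᵥ w)) ∧
        Real.sqrt (β ⬝ᵥ β) ≤ B ∧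
        s = ∑ i : Fin n, sgn (σ i) * (β ⬝ᵥ x i)}
      ≤ B * Real.sqrt (v σ ⬝ᵥ v σ) := by
    intro σ
    apply Real.sSup_le
    · rintro s ⟨β, hβinv, hβB, rfl⟩
      have h1 : ∑ i : Fin n, sgn (σ i) * (β ⬝ᵥ x i) = β ⬝ᵥ v σ := by
        rw [hv, dotP_sum]
        exact Finset.sum_congr rfl fun i _ => by
          rw [dotProduct_smul, smul_eq_mul, hinvdot β hβinv i]
      rw [h1]
      calc β ⬝ᵥ v σ ≤ Real.sqrt (β ⬝ᵥ β) * Real.sqrt (v σ ⬝ᵥ v σ) := dotP_cs β (v σ)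
        _ ≤ B * Real.sqrt (v σ ⬝ᵥ v σ) :=
          mul_le_mul_of_nonneg_right hβB (Real.sqrt_nonneg _)
    · positivity
  -- orthogonality of distinct Rademacher coordinates
  have horth : ∀ i j : Fin n, i ≠ j →
      ∑ σ : Fin n → Bool, sgn (σ i) * sgn (σ j) = 0 := by
    intro i j hij
    apply Finset.sum_ninvolution (fun σ => Function.update σ i (!(σ i)))
    · intro σ
      rw [Function.update_self, Function.update_of_ne (Ne.symm hij), hneg]
      ring
    · intro σ _ h
      have := congrFun h i
      rw [Function.update_self] at this
      exact (Bool.not_ne_self (σ i)) this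
    · intro σ; exact Finset.mem_univ _
    · intro σ
      funext k
      by_cases hk : k = i
      · subst hk; simp [Function.update_self]
      · simp [Function.update_of_ne hk]
  -- expansion of v σ ⬝ᵥ v σ
  have hexp : ∀ σ, v σ ⬝ᵥ v σ =
      ∑ i : Fin n, ∑ j : Fin n, (sgn (σ i) * sgn (σ j)) * (xbar i ⬝ᵥ xbar j) := by
    intro σ
    rw [hv, sum_dotP]
    refine Finset.sum_congr rfl fun i _ => ?_
    rw [smul_dotProduct, dotP_sum, Finset.smul_sum]
    refine Finset.sum_congr rfl fun j _ => ?_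
    rw [dotProduct_smul, smul_eq_mul, smul_eq_mul, ← mul_assoc]
  -- total sum over sign patterns
  have hsumq : ∑ σ : Fin n → Bool, v σ ⬝ᵥ v σ
      = (2 ^ n : ℝ) * ∑ i : Fin n, xbar i ⬝ᵥ xbar i := by
    have card2 : (Fintype.card (Fin n → Bool) : ℝ) = (2 ^ n : ℝ) := by
      simp [Fintype.card_fun]
    calc ∑ σ : Fin n → Bool, v σ ⬝ᵥ v σ
        = ∑ σ : Fin n → Bool, ∑ i : Fin n, ∑ j : Fin n,
            (sgn (σ i) * sgn (σ j)) * (xbar i ⬝ᵥ xbar j) :=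
          Finset.sum_congr rfl fun σ _ => hexp σ
      _ = ∑ i : Fin n, ∑ j : Fin n,
            (∑ σ : Fin n → Bool, sgn (σ i) * sgn (σ j)) * (xbar i ⬝ᵥ xbar j) := by
          rw [Finset.sum_comm]
          refine Finset.sum_congr rfl fun i _ => ?_
          rw [Finset.sum_comm]
          refine Finset.sum_congr rfl fun j _ => ?_
          rw [Finset.sum_mul]
      _ = ∑ i : Fin n, (2 ^ n : ℝ) * (xbar i ⬝ᵥ xbar i) := by
          refine Finset.sum_congr rfl fun i _ => ?_
          rw [Finset.sum_eq_single_of_mem i (Finset.mem_univ i)]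
          · congr 1
            rw [Finset.sum_congr rfl fun σ _ => hsq (σ i), Finset.sum_const,
              Finset.card_univ, nsmul_eq_mul, mul_one, card2]
          · intro j _ hji
            rw [horth i j (Ne.symm hji), zero_mul]
      _ = _ := by rw [← Finset.mul_sum]
  -- Cauchy-Schwarz on the σ-average
  have havg : ∑ σ : Fin n → Bool, Real.sqrt (v σ ⬝ᵥ v σ)
      ≤ Real.sqrt (2 ^ n : ℝ) * Real.sqrt (∑ σ : Fin n → Bool, v σ ⬝ᵥ v σ) := by
    have h := Finset.sum_mul_sq_le_sq_mul_sq Finset.univ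
      (fun σ : Fin n → Bool => Real.sqrt (v σ ⬝ᵥ v σ)) (fun _ => (1 : ℝ))
    simp only [mul_one, one_pow, Finset.sum_const, Finset.card_univ, nsmul_eq_mul] at h
    have h2 : ∀ σ : Fin n → Bool, Real.sqrt (v σ ⬝ᵥ v σ) ^ 2 = v σ ⬝ᵥ v σ :=
      fun σ => Real.sq_sqrt (dotP_nonneg _)
    rw [Finset.sum_congr rfl fun σ _ => h2 σ] at h
    have hnn : 0 ≤ ∑ σ : Fin n → Bool, Real.sqrt (v σ ⬝ᵥ v σ) :=
      Finset.sum_nonneg fun σ _ => Real.sqrt_nonneg _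
    calc ∑ σ : Fin n → Bool, Real.sqrt (v σ ⬝ᵥ v σ)
        = Real.sqrt ((∑ σ : Fin n → Bool, Real.sqrt (v σ ⬝ᵥ v σ)) ^ 2) :=
          (Real.sqrt_sq hnn).symm
      _ ≤ Real.sqrt ((∑ σ : Fin n → Bool, v σ ⬝ᵥ v σ) * (Fintype.card (Fin n → Bool) : ℝ)) :=
          Real.sqrt_le_sqrt h
      _ = _ := by
          rw [mul_comm, Real.sqrt_mul (by positivity)]
          congr 2
          simp [Fintype.card_fun]
  -- bound on ∑ i ‖xbar i‖²
  have hS : ∑ i : Fin n, xbar i ⬝ᵥ xbar i ≤ (n : ℝ) * M ^ 2 := by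
    calc ∑ i : Fin n, xbar i ⬝ᵥ xbar i ≤ ∑ _i : Fin n, M ^ 2 := by
          refine Finset.sum_le_sum fun i _ => ?_
          have : xbar i ⬝ᵥ xbar i = Real.sqrt (xbar i ⬝ᵥ xbar i) ^ 2 :=
            (Real.sq_sqrt (dotP_nonneg _)).symm
          rw [this]
          exact pow_le_pow_left₀ (Real.sqrt_nonneg _) (hMle i) 2
      _ = (n : ℝ) * M ^ 2 := by simp [Finset.sum_const, nsmul_eq_mul]
  -- combine averages
  have hsum_bound : ∑ σ : Fin n → Bool, Real.sqrt (v σ ⬝ᵥ v σ)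
      ≤ (2 ^ n : ℝ) * (Real.sqrt n * M) := by
    have h2n : (0 : ℝ) ≤ (2 ^ n : ℝ) := by positivity
    calc ∑ σ : Fin n → Bool, Real.sqrt (v σ ⬝ᵥ v σ)
        ≤ Real.sqrt (2 ^ n : ℝ) * Real.sqrt (∑ σ : Fin n → Bool, v σ ⬝ᵥ v σ) := havg
      _ ≤ Real.sqrt (2 ^ n : ℝ) * Real.sqrt ((2 ^ n : ℝ) * ((n : ℝ) * M ^ 2)) := by
          apply mul_le_mul_of_nonneg_left _ (Real.sqrt_nonneg _)
          apply Real.sqrt_le_sqrt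
          rw [hsumq]
          exact mul_le_mul_of_nonneg_left hS h2n
      _ = (2 ^ n : ℝ) * (Real.sqrt n * M) := by
          rw [Real.sqrt_mul h2n, Real.sqrt_mul (Nat.cast_nonneg n), Real.sqrt_sq hM0,
            ← mul_assoc, ← mul_assoc, Real.mul_self_sqrt h2n, mul_assoc]
  -- final assembly
  have hn' : (0 : ℝ) < n := by exact_mod_cast hn
  have hsn : (0 : ℝ) < Real.sqrt n := Real.sqrt_pos.mpr hn'
  calc (n : ℝ)⁻¹ * ((2 ^ n : ℝ)⁻¹ *
        ∑ σ : Fin n → Bool,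
          sSup {s : ℝ | ∃ β : Fin d → ℝ,
            (∀ (w : Fin d → ℝ) (g : G),
              β ⬝ᵥ w = β ⬝ᵥ ((ρ g : Matrix (Fin d) (Fin d) ℝ) *ᵥ w)) ∧
            Real.sqrt (β ⬝ᵥ β) ≤ B ∧
            s = ∑ i : Fin n, sgn (σ i) * (β ⬝ᵥ x i)})
      ≤ (n : ℝ)⁻¹ * ((2 ^ n : ℝ)⁻¹ *
          ∑ σ : Fin n → Bool, B * Real.sqrt (v σ ⬝ᵥ v σ)) := by
        apply mul_le_mul_of_nonneg_left _ (by positivity)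
        apply mul_le_mul_of_nonneg_left _ (by positivity)
        exact Finset.sum_le_sum fun σ _ => stepA σ
    _ ≤ (n : ℝ)⁻¹ * ((2 ^ n : ℝ)⁻¹ * (B * ((2 ^ n : ℝ) * (Real.sqrt n * M)))) := by
        apply mul_le_mul_of_nonneg_left _ (by positivity)
        apply mul_le_mul_of_nonneg_left _ (by positivity)
        rw [← Finset.mul_sum]
        exact mul_le_mul_of_nonneg_left hsum_bound hB
    _ = B * M / Real.sqrt n := by
        have h2n : (2 ^ n : ℝ) ≠ 0 := by positivity
        have hmul : Real.sqrt n * Real.sqrt n = (n : ℝ) := Real.mul_self_sqrt hn'.le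
        field_simp
        linear_combination B * M * hmul
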